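/- The ideal I_d = {A ⊆ ℕ : the upper natural density of A is 0} does not satisfy property (DL): there exists an increasing sequence (A_n) of subsets of ℕ with A_n ↑ ℕ and ℕ \ A_n ∉ I_d for every n, such that every pseudounion U of (A_n) (a set with A_n \ U finite for all n) has complement in I_d, i.e., d(ℕ \ U) = 0. One such witness is A_n = ℕ \ 2^n ℕ. -/

import Mathlib

open Filter

-- helper: count of nonzero multiples of d in [0,m]
lemma mult_count (d m : ℕ) :
    ({k : ℕ | d ∣ k ∧ k ≠ 0} ∩ Set.Iic m).ncard = m / d := by
  have : ({k : ℕ | d ∣ k ∧ k ≠ 0} ∩ Set.Iic m) =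
      ↑((Finset.Ioc 0 m).filter (d ∣ ·)) := by
    ext k
    simp [Finset.mem_filter, Finset.mem_Ioc, Nat.pos_iff_ne_zero, and_comm, and_assoc]
    tauto
  rw [this, Set.ncard_coe_finset, Nat.Ioc_filter_dvd_card_eq_div]

lemma ratio_nonneg (S : Set ℕ) (m : ℕ) : 0 ≤ ((S ∩ Set.Iic m).ncard : ℝ) / m := by
  positivity

lemma ratio_le_two (S : Set ℕ) (m : ℕ) : ((S ∩ Set.Iic m).ncard : ℝ) / m ≤ 2 := by
  rcases Nat.eq_zero_or_pos m with rfl | hm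
  · simp
  have hcard : (S ∩ Set.Iic m).ncard ≤ m + 1 := by
    have := Set.ncard_le_ncard (Set.inter_subset_right (s := S) (t := Set.Iic m))
      (Set.finite_Iic m)
    rwa [show (Set.Iic m).ncard = m + 1 by
      rw [← Finset.coe_Iic, Set.ncard_coe_finset, Nat.card_Iic]] at this
  rw [div_le_iff₀ (by exact_mod_cast hm)]
  have : ((S ∩ Set.Iic m).ncard : ℝ) ≤ m + 1 := by exact_mod_cast hcard
  have hm1 : (1 : ℝ) ≤ m := by exact_mod_cast hm
  linarith

theorem stmt_19 :
    ∃ A : ℕ → Set ℕ, Monotone A ∧ (⋃ n, A n) = Set.univ ∧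
      (∀ n : ℕ,
        ¬ limsup (fun m : ℕ => (((A n)ᶜ ∩ Set.Iic m).ncard : ℝ) / (m : ℝ)) atTop = 0) ∧
      ∀ U : Set ℕ, (∀ n : ℕ, (A n \ U).Finite) →
        limsup (fun m : ℕ => ((Uᶜ ∩ Set.Iic m).ncard : ℝ) / (m : ℝ)) atTop = 0 := by
  refine ⟨fun n => {0} ∪ {k | ¬ (2^n ∣ k)}, ?_, ?_, ?_, ?_⟩
  · -- Monotone
    intro n m hnm k hk
    rcases hk with hk | hk
    · exact Or.inl hk
    · exact Or.inr fun h => hk ((pow_dvd_pow 2 hnm).trans h)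
  · -- union = univ
    ext k
    simp only [Set.mem_iUnion, Set.mem_univ, iff_true]
    rcases Nat.eq_zero_or_pos k with rfl | hk
    · exact ⟨0, Or.inl rfl⟩
    · exact ⟨k, Or.inr fun h => absurd (Nat.le_of_dvd hk h) k.lt_two_pow_self.not_ge⟩
  · -- complements have positive upper density
    intro n h
    have hcompl : ({0} ∪ {k | ¬ (2^n ∣ k)})ᶜ = {k : ℕ | 2^n ∣ k ∧ k ≠ 0} := by
      ext k; simp [not_or, and_comm]
    set f : ℕ → ℝ := fun m => ((({0} ∪ {k | ¬ (2^n ∣ k)})ᶜ ∩ Set.Iic m).ncard : ℝ) / m with hf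
    have hfcount : ∀ m, f m = ((m / 2^n : ℕ) : ℝ) / m := by
      intro m; rw [hf]; simp only [hcompl, mult_count]
    set g : ℕ → ℝ := fun m => 1 / 2^n - 1 / m with hg
    have hgf : g ≤ᶠ[atTop] f := by
      filter_upwards [eventually_ge_atTop 1] with m hm
      have hm0 : (0:ℝ) < m := by exact_mod_cast hm
      rw [hfcount, hg]
      have key : (m : ℝ) / 2^n - 1 ≤ ((m / 2^n : ℕ) : ℝ) := by
        have h0 : 2^n * (m / 2^n) + m % 2^n = m := Nat.div_add_mod m (2^n)
        have h0' : (2:ℝ)^n * ((m / 2^n : ℕ):ℝ) + ((m % 2^n : ℕ):ℝ) = m := by exact_mod_cast h0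
        have h1 : ((m % 2^n : ℕ):ℝ) < (2:ℝ)^n := by
          exact_mod_cast Nat.mod_lt m (y := 2^n) (by positivity)
        have h2 : (0:ℝ) < 2^n := by positivity
        rw [sub_le_iff_le_add, div_le_iff₀ h2]
        nlinarith
      calc (1:ℝ) / 2^n - 1 / m = ((m:ℝ)/2^n - 1) / m := by
            field_simp
        _ ≤ ((m / 2^n : ℕ) : ℝ) / m := by gcongr
    have hgt : Tendsto g atTop (nhds (1 / 2^n)) := by
      rw [hg]
      have : Tendsto (fun m : ℕ => 1 / (m:ℝ)) atTop (nhds 0) :=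
        tendsto_one_div_atTop_nhds_zero_nat
      simpa using (tendsto_const_nhds (x := (1:ℝ)/2^n)).sub this
    have hle : limsup g atTop ≤ limsup f atTop := by
      exact limsup_le_limsup hgf hgt.isBoundedUnder_ge.isCoboundedUnder_le
        (isBoundedUnder_of ⟨2, fun m => ratio_le_two _ m⟩)
    rw [hgt.limsup_eq, h] at hle
    have : (0:ℝ) < 1 / 2^n := by positivity
    linarith
  · -- pseudounions
    intro U hU
    set f : ℕ → ℝ := fun m => ((Uᶜ ∩ Set.Iic m).ncard : ℝ) / m with hf
    have hbdd : IsBoundedUnder (· ≤ ·) atTop f :=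
      isBoundedUnder_of ⟨2, fun m => ratio_le_two _ m⟩
    have hcobdd : IsCoboundedUnder (· ≤ ·) atTop f :=
      (isBoundedUnder_of ⟨0, fun m => (ratio_nonneg _ m).ge⟩
        : IsBoundedUnder (· ≥ ·) atTop f).isCoboundedUnder_le
    have hub : ∀ n : ℕ, limsup f atTop ≤ 1 / 2^n := by
      intro n
      set c : ℕ := (({0} ∪ {k | ¬ (2^n ∣ k)}) \ U).ncard with hc
      set g : ℕ → ℝ := fun m => 1 / 2^n + (c + 1) / m with hg
      have hgf : f ≤ᶠ[atTop] g := by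
        filter_upwards [eventually_ge_atTop 1] with m hm
        have hm0 : (0:ℝ) < m := by exact_mod_cast hm
        have hsub : Uᶜ ∩ Set.Iic m ⊆
            ({k : ℕ | 2^n ∣ k ∧ k ≠ 0} ∩ Set.Iic m) ∪ (({0} ∪ {k | ¬ (2^n ∣ k)}) \ U) := by
          rintro k ⟨hkU, hkm⟩
          by_cases hA : k ∈ ({0} ∪ {k | ¬ (2^n ∣ k)} : Set ℕ)
          · exact Or.inr ⟨hA, hkU⟩
          · simp only [Set.mem_union, Set.mem_singleton_iff, Set.mem_setOf_eq, not_or,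
              not_not] at hA
            exact Or.inl ⟨⟨hA.2, hA.1⟩, hkm⟩
        have hcard : (Uᶜ ∩ Set.Iic m).ncard ≤ m / 2^n + c := by
          calc (Uᶜ ∩ Set.Iic m).ncard
              ≤ (({k : ℕ | 2^n ∣ k ∧ k ≠ 0} ∩ Set.Iic m) ∪
                  (({0} ∪ {k | ¬ (2^n ∣ k)}) \ U)).ncard :=
                Set.ncard_le_ncard hsub (((Set.finite_Iic m).inter_of_right _).union (hU n))
            _ ≤ ({k : ℕ | 2^n ∣ k ∧ k ≠ 0} ∩ Set.Iic m).ncard + c :=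
                Set.ncard_union_le _ _
            _ = m / 2^n + c := by rw [mult_count]
        rw [hf, hg]
        have h1 : ((Uᶜ ∩ Set.Iic m).ncard : ℝ) ≤ ((m / 2^n : ℕ) : ℝ) + c := by
          exact_mod_cast hcard
        have h2 : ((m / 2^n : ℕ) : ℝ) ≤ (m : ℝ) / 2^n := by
          exact_mod_cast Nat.cast_div_le
        have h3 : ((Uᶜ ∩ Set.Iic m).ncard : ℝ) / m ≤ ((m:ℝ)/2^n + c) / m := by
          gcongr
          linarith
        calc ((Uᶜ ∩ Set.Iic m).ncard : ℝ) / m ≤ ((m:ℝ)/2^n + c) / m := h3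
          _ = 1 / 2^n + (c:ℝ) / m := by
              field_simp
          _ ≤ 1 / 2^n + ((c:ℝ) + 1) / m := by
              gcongr
              linarith
      have hgt : Tendsto g atTop (nhds (1 / 2^n)) := by
        rw [hg]
        have h1 : Tendsto (fun m : ℕ => ((c:ℝ)+1) / (m:ℝ)) atTop (nhds 0) := by
          simpa [div_eq_mul_inv] using tendsto_one_div_atTop_nhds_zero_nat.const_mul ((c:ℝ)+1)
        simpa using (tendsto_const_nhds (x := (1:ℝ)/2^n)).add h1
      have := limsup_le_limsup hgf hcobdd hgt.isBoundedUnder_le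
      rwa [hgt.limsup_eq] at this
    have hlb : 0 ≤ limsup f atTop :=
      le_limsup_of_frequently_le
        (Frequently.of_forall (fun m => ratio_nonneg _ m)) hbdd
    have hub0 : limsup f atTop ≤ 0 := by
      have ht : Tendsto (fun n : ℕ => (1:ℝ) / 2^n) atTop (nhds 0) := by
        have := tendsto_pow_atTop_nhds_zero_of_lt_one
          (by norm_num : (0:ℝ) ≤ 1/2) (by norm_num : (1/2:ℝ) < 1)
        simpa [div_pow] using this
      exact ge_of_tendsto' ht hub
    linarith
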